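/- Let A be a stable matching instance, B obtained from A by shifting worker w up past workers w_1 >_f ... >_f w_k in firm f's list. Then the set M_A \ M_B equals exactly the set of stable matchings of A that match f to one of w_1,...,w_k and match w to a firm strictly below f in w's preference list. -/
import Mathlib


/-- A stable matching instance: each worker `w` ranks firms via `wr w` (lower rank =
more preferred, rank = position in the preference list) and each firm `f` ranks
workers via `fr f`. -/
structure SMInstance (W F : Type) where
  wr : W → F → ℕ
  fr : F → W → ℕ
  wr_inj : ∀ w, Function.Injective (wr w)
  fr_inj : ∀ f, Function.Injective (fr f)

variable {W F : Type}

/-- `(w, f)` is a blocking pair for the matching `M` under instance `A`. -/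
def SMInstance.Blocking (A : SMInstance W F) (M : W ≃ F) (w : W) (f : F) : Prop :=
  M w ≠ f ∧ A.wr w f < A.wr w (M w) ∧ A.fr f w < A.fr f (M.symm f)

/-- `M` is stable under `A`: it has no blocking pair. -/
def SMInstance.Stable (A : SMInstance W F) (M : W ≃ F) : Prop :=
  ∀ w f, ¬ A.Blocking M w f

/-- Pointwise "less preferred partner" (join) of two matchings, w.r.t. the worker
preferences of `A`. -/
def worse (A : SMInstance W F) (M1 M2 : W ≃ F) (w : W) : F :=
  if A.wr w (M1 w) ≤ A.wr w (M2 w) then M2 w else M1 w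

/-- Pointwise "more preferred partner" (meet) of two matchings, w.r.t. the worker
preferences of `A`. -/
def better (A : SMInstance W F) (M1 M2 : W ≃ F) (w : W) : F :=
  if A.wr w (M1 w) ≤ A.wr w (M2 w) then M1 w else M2 w

/-- Let `B` be obtained from `A` by shifting worker `w0` up past the workers
`ws 0 >_{f0} ⋯ >_{f0} ws (k-1)` immediately above `w0` in firm `f0`'s list. Then a
matching `M` stable under `A` fails to be stable under `B` exactly when `f0` is
matched to one of the `ws i` and `w0` is matched to a firm strictly below `f0` in
`w0`'s list. -/
theorem stmt7 (A B : SMInstance W F) (w0 : W) (f0 : F) {k : ℕ} (ws : Fin k → W)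
    (hne : ∀ i, ws i ≠ w0)
    (hord : ∀ i j : Fin k, i < j → A.fr f0 (ws i) < A.fr f0 (ws j))
    (habove : ∀ i, A.fr f0 (ws i) < A.fr f0 w0)
    -- the `ws i` are exactly the workers (weakly) between `ws i` and `w0` in `f0`'s list:
    (hconsec : ∀ w' (i : Fin k), A.fr f0 (ws i) ≤ A.fr f0 w' → A.fr f0 w' ≤ A.fr f0 w0 →
      (w' = w0 ∨ ∃ j, w' = ws j))
    (hwr : B.wr = A.wr) (hfr : ∀ f, f ≠ f0 → B.fr f = A.fr f)
    (hsame : ∀ w1 w2, w1 ≠ w0 → w2 ≠ w0 →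
      (B.fr f0 w1 < B.fr f0 w2 ↔ A.fr f0 w1 < A.fr f0 w2))
    -- in `B`, the workers above `w0` are exactly those above `w0` in `A` minus the `ws i`:
    (hshift : ∀ w', B.fr f0 w' < B.fr f0 w0 ↔
      (A.fr f0 w' < A.fr f0 w0 ∧ ∀ i, w' ≠ ws i)) :
    ∀ M : W ≃ F, A.Stable M →
      (¬ B.Stable M ↔ ((∃ i, M.symm f0 = ws i) ∧ A.wr w0 f0 < A.wr w0 (M w0))) := by
  intro M hA
  constructor
  · intro hB
    simp only [SMInstance.Stable, SMInstance.Blocking, not_forall, not_not] at hB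
    obtain ⟨w, f, hMw, hwrlt, hfrlt⟩ := hB
    rw [hwr] at hwrlt
    by_cases hf : f = f0
    · rw [hf] at hMw hwrlt hfrlt
      have hnb := hA w f0
      have hwm : w ≠ M.symm f0 := by
        intro h
        apply hMw
        rw [h, M.apply_symm_apply]
      have hAgt : A.fr f0 (M.symm f0) < A.fr f0 w := by
        rcases lt_trichotomy (A.fr f0 (M.symm f0)) (A.fr f0 w) with h | h | h
        · exact h
        · exact absurd (A.fr_inj f0 h.symm) hwm
        · exact absurd ⟨hMw, hwrlt, h⟩ hnb
      by_cases hw : w = w0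
      · rw [hw] at hwrlt hfrlt hwm hAgt
        have hm : M.symm f0 ≠ w0 := fun h => hwm h.symm
        have hnot : ¬ B.fr f0 (M.symm f0) < B.fr f0 w0 := lt_asymm hfrlt
        rw [hshift] at hnot
        push_neg at hnot
        obtain ⟨i, hi⟩ := hnot hAgt
        exact ⟨⟨i, hi⟩, hwrlt⟩
      · exfalso
        by_cases hm : M.symm f0 = w0
        · rw [hm] at hfrlt
          rw [hshift] at hfrlt
          rw [hm] at hAgt
          exact lt_asymm hAgt hfrlt.1
        · rw [hsame w (M.symm f0) hw hm] at hfrlt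
          exact lt_asymm hAgt hfrlt
    · exact absurd ⟨hMw, hwrlt, by rw [← hfr f hf]; exact hfrlt⟩ (hA w f)
  · rintro ⟨⟨i, hi⟩, hlt⟩ hB
    apply hB w0 f0
    refine ⟨?_, by rw [hwr]; exact hlt, ?_⟩
    · intro h
      have : M.symm f0 = w0 := by rw [← h, M.symm_apply_apply]
      exact hne i (hi ▸ this)
    · rw [hi]
      have hnot : ¬ B.fr f0 (ws i) < B.fr f0 w0 := by
        rw [hshift]
        rintro ⟨-, h⟩
        exact h i rfl
      rcases lt_trichotomy (B.fr f0 w0) (B.fr f0 (ws i)) with h | h | h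
      · exact h
      · exact absurd (B.fr_inj f0 h) (Ne.symm (hne i))
      · exact absurd h hnot
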